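/- For every positive integer n and every k with 1 ≤ k ≤ n, in the set of partitions where each part j comes in j colors, F_k(n) = k · ( G_k(n) − G_k(n − k) ), where G_k(m) = 0 for m ≤ 0. -/

import Mathlib

/-- A colored partition of `n`, where the part `j` comes in `b j` colors, is a multiset of
pairs `(j, c)` with `j` a positive integer and `c ∈ {1, …, b j}`, whose weight (the sum of
the first coordinates, counted with multiplicity) is `n`. -/
def IsColoredPartition (b : ℕ → ℕ) (n : ℕ) (M : Multiset (ℕ × ℕ)) : Prop :=
  (∀ p ∈ M, 0 < p.1 ∧ 1 ≤ p.2 ∧ p.2 ≤ b p.1) ∧ (M.map Prod.fst).sum = n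

/-- `h n`: the number of colored partitions of `n` (so `h 0 = 1`). -/
noncomputable def coloredh (b : ℕ → ℕ) (n : ℕ) : ℕ := Nat.card {M // IsColoredPartition b n M}

/-- `F k n`: the total number of parts with first coordinate `k`, counted with multiplicity,
over all colored partitions of `n`. -/
noncomputable def coloredF (b : ℕ → ℕ) (k n : ℕ) : ℕ :=
  ∑ᶠ M ∈ {M | IsColoredPartition b n M}, (Multiset.filter (fun p => p.1 = k) M).card

/-- `G k n`: the total number of distinct colored parts occurring with multiplicity at least
`k`, summed over all colored partitions of `n`. -/
noncomputable def coloredG (b : ℕ → ℕ) (k n : ℕ) : ℕ :=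
  ∑ᶠ M ∈ {M | IsColoredPartition b n M},
    (M.toFinset.filter fun p => k ≤ M.count p).card

open Finset

namespace ColoredAux

/-- universe of possible pairs for partitions of weight ≤ n (with b = id) -/
def Q (n : ℕ) : Finset (ℕ × ℕ) := (Icc 1 n ×ˢ Icc 1 n).filter fun p => p.2 ≤ p.1

lemma mem_Q {n : ℕ} {q : ℕ × ℕ} :
    q ∈ Q n ↔ 1 ≤ q.1 ∧ q.1 ≤ n ∧ 1 ≤ q.2 ∧ q.2 ≤ q.1 := by
  simp only [Q, mem_filter, mem_product, mem_Icc]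
  omega

lemma sum_le_sum_of_le {s t : Multiset ℕ} (h : s ≤ t) : s.sum ≤ t.sum := by
  obtain ⟨u, rfl⟩ := Multiset.le_iff_exists_add.1 h
  simp

lemma card_le_of_icp {n : ℕ} {M : Multiset (ℕ × ℕ)}
    (h : IsColoredPartition (fun j => j) n M) : Multiset.card M ≤ n := by
  have h1 : Multiset.card (M.map Prod.fst) • 1 ≤ (M.map Prod.fst).sum := by
    apply Multiset.card_nsmul_le_sum
    intro x hx
    obtain ⟨p, hp, rfl⟩ := Multiset.mem_map.1 hx
    exact (h.1 p hp).1
  simpa [h.2] using h1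

lemma mem_Q_of_mem {n m : ℕ} (hmn : m ≤ n) {M : Multiset (ℕ × ℕ)}
    (h : IsColoredPartition (fun j => j) m M) {q : ℕ × ℕ} (hq : q ∈ M) : q ∈ Q n := by
  obtain ⟨h1, h2, h3⟩ := h.1 q hq
  have hfst : q.1 ≤ m := by
    have : q.1 ∈ M.map Prod.fst := Multiset.mem_map_of_mem _ hq
    obtain ⟨t, ht⟩ := Multiset.exists_cons_of_mem this
    have := h.2
    rw [ht, Multiset.sum_cons] at this
    omega
  exact mem_Q.2 ⟨h1, le_trans hfst hmn, h2, h3⟩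

lemma finiteP (n : ℕ) : {M | IsColoredPartition (fun j => j) n M}.Finite := by
  apply Set.Finite.subset (Multiset.finite_toSet ((n • (Q n).val).powerset))
  intro M hM
  simp only [Set.mem_setOf_eq] at hM
  show M ∈ (n • (Q n).val).powerset
  rw [Multiset.mem_powerset]
  rw [Multiset.le_iff_count]
  intro q
  by_cases hqM : q ∈ M
  · have h1 : M.count q ≤ n := le_trans (Multiset.count_le_card q M) (card_le_of_icp hM)
    have h2 : q ∈ Q n := mem_Q_of_mem le_rfl hM hqM
    rw [Multiset.count_nsmul,
      Multiset.count_eq_one_of_mem (Q n).nodup h2]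
    omega
  · simp [Multiset.count_eq_zero_of_notMem hqM]

noncomputable def PF (n : ℕ) : Finset (Multiset (ℕ × ℕ)) := (finiteP n).toFinset

lemma mem_PF {n : ℕ} {M : Multiset (ℕ × ℕ)} :
    M ∈ PF n ↔ IsColoredPartition (fun j => j) n M := by
  simp [PF, Set.Finite.mem_toFinset]


lemma card_count_ge {n m j : ℕ} (hj : 1 ≤ j) {q : ℕ × ℕ} (hq : q ∈ Q n) :
    ((PF m).filter fun M => j ≤ M.count q).card
      = if j * q.1 ≤ m then (PF (m - j * q.1)).card else 0 := by
  obtain ⟨hq1, hq2, hq3, hq4⟩ := mem_Q.1 hq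
  split_ifs with hle
  · apply Finset.card_bij' (fun M _ => M - Multiset.replicate j q)
      (fun M' _ => M' + Multiset.replicate j q)
    · -- maps into PF (m - j*q.1)
      intro M hM
      rw [Finset.mem_filter, mem_PF] at hM
      obtain ⟨⟨hparts, hsum⟩, hcount⟩ := hM
      have hrep : Multiset.replicate j q ≤ M := Multiset.le_count_iff_replicate_le.1 hcount
      have hMeq : (M - Multiset.replicate j q) + Multiset.replicate j q = M :=
        tsub_add_cancel_of_le hrep
      rw [mem_PF]
      constructor
      · intro p hp
        exact hparts p (Multiset.mem_of_le (tsub_le_self) hp)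
      · have : ((M - Multiset.replicate j q).map Prod.fst).sum + j * q.1 = m := by
          calc ((M - Multiset.replicate j q).map Prod.fst).sum + j * q.1
              = ((M - Multiset.replicate j q).map Prod.fst).sum
                + ((Multiset.replicate j q).map Prod.fst).sum := by
                simp [Multiset.map_replicate, Multiset.sum_replicate, smul_eq_mul]
            _ = (M.map Prod.fst).sum := by
                rw [← Multiset.sum_add, ← Multiset.map_add, hMeq]
            _ = m := hsum
        omega
    · -- inverse maps into filter
      intro M' hM'
      rw [mem_PF] at hM'
      obtain ⟨hparts, hsum⟩ := hM'
      rw [Finset.mem_filter, mem_PF]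
      refine ⟨⟨?_, ?_⟩, ?_⟩
      · intro p hp
        rcases Multiset.mem_add.1 hp with h | h
        · exact hparts p h
        · rw [Multiset.eq_of_mem_replicate h]
          exact ⟨hq1, hq3, hq4⟩
      · rw [Multiset.map_add, Multiset.sum_add, hsum,
          Multiset.map_replicate, Multiset.sum_replicate, smul_eq_mul]
        omega
      · rw [Multiset.count_add, Multiset.count_replicate_self]
        omega
    · intro M hM
      rw [Finset.mem_filter] at hM
      exact tsub_add_cancel_of_le (Multiset.le_count_iff_replicate_le.1 hM.2)
    · intro M' _
      exact add_tsub_cancel_right _ _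
  · rw [Finset.card_eq_zero, Finset.filter_eq_empty_iff]
    intro M hM
    rw [mem_PF] at hM
    intro hcount
    have hrep : Multiset.replicate j q ≤ M := Multiset.le_count_iff_replicate_le.1 hcount
    have : ((Multiset.replicate j q).map Prod.fst).sum ≤ (M.map Prod.fst).sum :=
      sum_le_sum_of_le (Multiset.map_le_map hrep)
    rw [Multiset.map_replicate, Multiset.sum_replicate, smul_eq_mul, hM.2] at this
    omega


lemma fiber_card {n j : ℕ} (h1 : 1 ≤ j) (h2 : j ≤ n) :
    ((Q n).filter fun q => q.1 = j).card = j := by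
  have himg : ((Q n).filter fun q => q.1 = j) = (Icc 1 j).image (fun c => (j, c)) := by
    ext ⟨a, c⟩
    simp only [Finset.mem_filter, mem_Q, Finset.mem_image, mem_Icc, Prod.mk.injEq]
    constructor
    · rintro ⟨⟨ha1, ha2, hc1, hc2⟩, rfl⟩
      exact ⟨c, ⟨hc1, hc2⟩, rfl, rfl⟩
    · rintro ⟨c', ⟨hc1, hc2⟩, rfl, rfl⟩
      omega
  rw [himg, Finset.card_image_of_injective _ (fun a b h => by simpa using h), Nat.card_Icc]
  omega

lemma filter_card_eq_sum {n k : ℕ} {M : Multiset (ℕ × ℕ)}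
    (hM : IsColoredPartition (fun j => j) n M) :
    Multiset.card (Multiset.filter (fun p => p.1 = k) M)
      = ∑ q ∈ (Q n).filter (fun q => q.1 = k), M.count q := by
  have hsub : (Multiset.filter (fun p => p.1 = k) M).toFinset
      ⊆ (Q n).filter (fun q => q.1 = k) := by
    intro q hq
    rw [Multiset.mem_toFinset, Multiset.mem_filter] at hq
    exact Finset.mem_filter.2 ⟨mem_Q_of_mem le_rfl hM hq.1, hq.2⟩
  rw [← Multiset.toFinset_sum_count_eq (Multiset.filter (fun p => p.1 = k) M),
    Finset.sum_subset hsub (fun q _ hq => by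
      rw [Multiset.count_eq_zero]
      exact fun hmem => hq (Multiset.mem_toFinset.2 hmem))]
  apply Finset.sum_congr rfl
  intro q hq
  rw [Multiset.count_filter, if_pos (Finset.mem_filter.1 hq).2]

lemma G_filter_eq {n m k : ℕ} (hmn : m ≤ n) (hk : 1 ≤ k) {M : Multiset (ℕ × ℕ)}
    (hM : IsColoredPartition (fun j => j) m M) :
    (M.toFinset.filter fun p => k ≤ M.count p) = (Q n).filter fun p => k ≤ M.count p := by
  ext q
  simp only [Finset.mem_filter, Multiset.mem_toFinset]
  constructor
  · rintro ⟨hmem, hcount⟩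
    exact ⟨mem_Q_of_mem hmn hM hmem, hcount⟩
  · rintro ⟨_, hcount⟩
    refine ⟨?_, hcount⟩
    rw [← Multiset.count_pos]
    omega

lemma count_eq_sum_ite {c n : ℕ} (hc : c ≤ n) :
    c = ∑ m ∈ Icc 1 n, if m ≤ c then 1 else 0 := by
  have hfil : (Icc 1 n).filter (fun m => m ≤ c) = Icc 1 c := by
    ext m
    simp only [Finset.mem_filter, mem_Icc]
    omega
  rw [Finset.sum_boole, hfil, Nat.card_Icc]
  simp

lemma F_eq {n k : ℕ} (hk : 1 ≤ k) (hkn : k ≤ n) :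
    coloredF (fun j => j) k n
      = k * ∑ m ∈ Icc 1 n, (if m * k ≤ n then (PF (n - m * k)).card else 0) := by
  rw [coloredF, finsum_mem_eq_finite_toFinset_sum _ (finiteP n)]
  calc ∑ M ∈ PF n, Multiset.card (Multiset.filter (fun p => p.1 = k) M)
      = ∑ M ∈ PF n, ∑ q ∈ (Q n).filter (fun q => q.1 = k), M.count q := by
        exact Finset.sum_congr rfl fun M hM => filter_card_eq_sum (mem_PF.1 hM)
    _ = ∑ q ∈ (Q n).filter (fun q => q.1 = k), ∑ M ∈ PF n, M.count q := Finset.sum_comm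
    _ = ∑ _q ∈ (Q n).filter (fun q => q.1 = k),
          ∑ m ∈ Icc 1 n, (if m * k ≤ n then (PF (n - m * k)).card else 0) := by
        apply Finset.sum_congr rfl
        intro q hq
        obtain ⟨hqQ, hqk⟩ := Finset.mem_filter.1 hq
        calc ∑ M ∈ PF n, M.count q
            = ∑ M ∈ PF n, ∑ m ∈ Icc 1 n, (if m ≤ M.count q then 1 else 0) := by
              exact Finset.sum_congr rfl fun M hM =>
                count_eq_sum_ite (le_trans (Multiset.count_le_card q M)
                  (card_le_of_icp (mem_PF.1 hM)))
          _ = ∑ m ∈ Icc 1 n, ∑ M ∈ PF n, (if m ≤ M.count q then 1 else 0) :=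
              Finset.sum_comm
          _ = ∑ m ∈ Icc 1 n, ((PF n).filter (fun M => m ≤ M.count q)).card := by
              simp [Finset.sum_boole]
          _ = ∑ m ∈ Icc 1 n, (if m * k ≤ n then (PF (n - m * k)).card else 0) := by
              apply Finset.sum_congr rfl
              intro m hm
              rw [card_count_ge (mem_Icc.1 hm).1 hqQ, hqk]
    _ = k * ∑ m ∈ Icc 1 n, (if m * k ≤ n then (PF (n - m * k)).card else 0) := by
        rw [Finset.sum_const, smul_eq_mul, fiber_card hk hkn]

lemma G_eq {n m k : ℕ} (hmn : m ≤ n) (hk : 1 ≤ k) :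
    coloredG (fun j => j) k m
      = ∑ j ∈ Icc 1 n, j * (if k * j ≤ m then (PF (m - k * j)).card else 0) := by
  rw [coloredG, finsum_mem_eq_finite_toFinset_sum _ (finiteP m)]
  calc ∑ M ∈ PF m, ((M.toFinset.filter fun p => k ≤ M.count p)).card
      = ∑ M ∈ PF m, (((Q n).filter fun p => k ≤ M.count p)).card := by
        exact Finset.sum_congr rfl fun M hM => by rw [G_filter_eq hmn hk (mem_PF.1 hM)]
    _ = ∑ M ∈ PF m, ∑ q ∈ Q n, (if k ≤ M.count q then 1 else 0) := by
        simp [Finset.sum_boole]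
    _ = ∑ q ∈ Q n, ((PF m).filter fun M => k ≤ M.count q).card := by
        rw [Finset.sum_comm]
        simp [Finset.sum_boole]
    _ = ∑ q ∈ Q n, (if k * q.1 ≤ m then (PF (m - k * q.1)).card else 0) :=
        Finset.sum_congr rfl fun q hq => card_count_ge hk hq
    _ = ∑ j ∈ Icc 1 n, ∑ q ∈ (Q n).filter (fun q => q.1 = j),
          (if k * q.1 ≤ m then (PF (m - k * q.1)).card else 0) :=
        (Finset.sum_fiberwise_of_maps_to
          (fun q hq => mem_Icc.2 ⟨(mem_Q.1 hq).1, (mem_Q.1 hq).2.1⟩) _).symm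
    _ = ∑ j ∈ Icc 1 n, j * (if k * j ≤ m then (PF (m - k * j)).card else 0) := by
        apply Finset.sum_congr rfl
        intro j hj
        rw [Finset.sum_congr rfl (fun q hq => by rw [(Finset.mem_filter.1 hq).2]),
          Finset.sum_const, smul_eq_mul, fiber_card (mem_Icc.1 hj).1 (mem_Icc.1 hj).2]

lemma telescope (n : ℕ) (T : ℕ → ℤ) (hT : T (n + 1) = 0) :
    (∑ j ∈ Icc 1 n, (j : ℤ) * T j) - (∑ j ∈ Icc 1 n, (j : ℤ) * T (j + 1))
      = ∑ j ∈ Icc 1 n, T j := by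
  set v : ℕ → ℤ := fun j => ((j : ℤ) - 1) * T j with hv
  have h1 : ∀ N : ℕ, ∑ j ∈ Icc 1 N, (v j - v (j + 1)) = v 1 - v (N + 1) := by
    intro N
    induction N with
    | zero => simp
    | succ N ih =>
      rw [Finset.sum_Icc_succ_top (by omega), ih]
      ring
  have h3 : ∑ j ∈ Icc 1 n, ((j : ℤ) * T j - (j : ℤ) * T (j + 1) - T j) = v 1 - v (n + 1) := by
    rw [← h1 n]
    apply Finset.sum_congr rfl
    intro j _
    simp only [hv]
    push_cast
    ring
  have h4 : v 1 = 0 := by simp [hv]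
  have h5 : v (n + 1) = 0 := by simp [hv, hT]
  rw [Finset.sum_sub_distrib, Finset.sum_sub_distrib, h4, h5] at h3
  linarith


end ColoredAux

open ColoredAux in
/-- For partitions where each part `j` comes in `j` colors,
`F_k(n) = k · (G_k(n) - G_k(n - k))`. -/
theorem coloredF_eq_k_mul_sub (n k : ℕ) (hn : 0 < n) (hk : 1 ≤ k) (hkn : k ≤ n) :
    (coloredF (fun j => j) k n : ℤ)
      = k * ((coloredG (fun j => j) k n : ℤ) - (coloredG (fun j => j) k (n - k) : ℤ)) := by
  rw [F_eq hk hkn, G_eq (le_refl n) hk, G_eq (Nat.sub_le n k) hk]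
  push_cast
  set T : ℕ → ℤ := fun j => if k * j ≤ n then ((PF (n - k * j)).card : ℤ) else 0 with hTdef
  have hTn1 : T (n + 1) = 0 := by
    rw [hTdef]
    have : 1 * (n + 1) ≤ k * (n + 1) := Nat.mul_le_mul_right (n + 1) hk
    simp only
    rw [if_neg (by omega)]
  have e1 : ∑ m ∈ Finset.Icc 1 n, (if m * k ≤ n then ((PF (n - m * k)).card : ℤ) else 0)
      = ∑ m ∈ Finset.Icc 1 n, T m := by
    apply Finset.sum_congr rfl
    intro m _
    rw [hTdef]
    simp only [mul_comm m k]
  have e3 : ∑ j ∈ Finset.Icc 1 n,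
        (j : ℤ) * (if k * j ≤ n - k then ((PF (n - k - k * j)).card : ℤ) else 0)
      = ∑ j ∈ Finset.Icc 1 n, (j : ℤ) * T (j + 1) := by
    apply Finset.sum_congr rfl
    intro j _
    congr 1
    rw [hTdef]
    simp only [Nat.mul_succ]
    have hkj : k * j + k ≤ n ↔ k * j ≤ n - k := by omega
    by_cases h : k * j + k ≤ n
    · rw [if_pos (hkj.1 h), if_pos h, show n - k - k * j = n - (k * j + k) by omega]
    · rw [if_neg (fun hh => h (hkj.2 hh)), if_neg h]
  rw [e1, e3, ← telescope n T hTn1]
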